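/- Combining a K-Lipschitz separable cost Φ(L) = ∑_t φ_t(L(t)) with the load-deviation bound: if s^A has at most F fractional entries, s^I agrees with s^A on integral entries, entries of both schedules lie in [0,1], and each P^{(j)} has nonnegative entries with column sums at most M, then Φ(L^I) - Φ(L^A) ≤ K·M·F, where L^A and L^I are the aggregate loads induced by s^A and s^I respectively. -/

import Mathlib

/-- Combining a `K`-Lipschitz separable cost with the load-deviation bound:
if `s^A` has at most `F` fractional entries, `s^I` agrees with `s^A` on
integral entries, all entries of both schedules lie in `[0,1]`, and each
`P^{(j)}` is nonnegative with column sums at most `M`, then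
`Φ(L^I) - Φ(L^A) ≤ K·M·F`. -/
theorem stmt4 {J : Type*} [Fintype J] (T : ℕ) (K M : ℝ) (hK : 0 < K) (hM : 0 < M)
    (φ : Fin T → ℝ → ℝ)
    (hφ : ∀ t : Fin T, ∀ x y : ℝ, |φ t x - φ t y| ≤ K * |x - y|)
    (P : J → Matrix (Fin T) (Fin T) ℝ)
    (hPnn : ∀ j t t', 0 ≤ P j t t')
    (hPcol : ∀ j t', ∑ t, P j t t' ≤ M)
    (sA sI : J → Fin T → ℝ)
    (hA01 : ∀ j t, sA j t ∈ Set.Icc (0 : ℝ) 1)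
    (hI01 : ∀ j t, sI j t ∈ Set.Icc (0 : ℝ) 1)
    (hagree : ∀ j t, (sA j t = 0 ∨ sA j t = 1) → sI j t = sA j t)
    (F : ℕ)
    (hF : {q : J × Fin T | sA q.1 q.2 ≠ 0 ∧ sA q.1 q.2 ≠ 1}.ncard ≤ F) :
    (∑ t : Fin T, φ t (∑ j, ∑ t', P j t t' * sI j t')) -
        (∑ t : Fin T, φ t (∑ j, ∑ t', P j t t' * sA j t'))
      ≤ K * M * F := by
  classical
  have hD1 : ∀ j t, |sI j t - sA j t| ≤ 1 := by
    intro j t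
    have hA := hA01 j t; have hI := hI01 j t
    rw [abs_le]
    constructor
    · linarith [hA.2, hI.1]
    · linarith [hA.1, hI.2]
  have hDnn : ∀ j t, (0:ℝ) ≤ |sI j t - sA j t| := fun j t => abs_nonneg _
  -- total fractional deviation bound
  have hDsum : ∑ j, ∑ t', |sI j t' - sA j t'| ≤ (F : ℝ) := by
    have h1 : ∑ j, ∑ t', |sI j t' - sA j t'|
        = ∑ q : J × Fin T, |sI q.1 q.2 - sA q.1 q.2| := by
      rw [Fintype.sum_prod_type]
    rw [h1]
    set S := {q : J × Fin T | sA q.1 q.2 ≠ 0 ∧ sA q.1 q.2 ≠ 1} with hS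
    have hSfin : S.Finite := Set.toFinite S
    have h2 : ∑ q : J × Fin T, |sI q.1 q.2 - sA q.1 q.2|
        = ∑ q ∈ hSfin.toFinset, |sI q.1 q.2 - sA q.1 q.2| := by
      refine (Finset.sum_subset (Finset.subset_univ _) ?_).symm
      intro q _ hq
      have hin : sA q.1 q.2 = 0 ∨ sA q.1 q.2 = 1 := by
        by_contra h
        push_neg at h
        exact hq (hSfin.mem_toFinset.mpr ⟨h.1, h.2⟩)
      rw [hagree q.1 q.2 hin, sub_self, abs_zero]
    rw [h2]
    calc ∑ q ∈ hSfin.toFinset, |sI q.1 q.2 - sA q.1 q.2|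
        ≤ ∑ _q ∈ hSfin.toFinset, (1:ℝ) :=
          Finset.sum_le_sum (fun q _ => hD1 q.1 q.2)
      _ = (hSfin.toFinset.card : ℝ) := by simp
      _ ≤ (F : ℝ) := by
          have hcard : hSfin.toFinset.card = S.ncard :=
            (Set.ncard_eq_toFinset_card S hSfin).symm
          exact_mod_cast hcard ▸ hF
  -- per-time-step bound
  have hstep : ∀ t : Fin T,
      φ t (∑ j, ∑ t', P j t t' * sI j t') - φ t (∑ j, ∑ t', P j t t' * sA j t')
        ≤ K * ∑ j, ∑ t', P j t t' * |sI j t' - sA j t'| := by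
    intro t
    have h1 := hφ t (∑ j, ∑ t', P j t t' * sI j t') (∑ j, ∑ t', P j t t' * sA j t')
    have h2 : |(∑ j, ∑ t', P j t t' * sI j t') - ∑ j, ∑ t', P j t t' * sA j t'|
        ≤ ∑ j, ∑ t', P j t t' * |sI j t' - sA j t'| := by
      rw [← Finset.sum_sub_distrib]
      refine (Finset.abs_sum_le_sum_abs _ _).trans (Finset.sum_le_sum fun j _ => ?_)
      rw [← Finset.sum_sub_distrib]
      refine (Finset.abs_sum_le_sum_abs _ _).trans (Finset.sum_le_sum fun t' _ => ?_)
      rw [← mul_sub, abs_mul, abs_of_nonneg (hPnn j t t')]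
    have h3 := le_abs_self
      (φ t (∑ j, ∑ t', P j t t' * sI j t') - φ t (∑ j, ∑ t', P j t t' * sA j t'))
    have h4 := mul_le_mul_of_nonneg_left h2 hK.le
    linarith
  calc (∑ t : Fin T, φ t (∑ j, ∑ t', P j t t' * sI j t')) -
        (∑ t : Fin T, φ t (∑ j, ∑ t', P j t t' * sA j t'))
      = ∑ t : Fin T, (φ t (∑ j, ∑ t', P j t t' * sI j t')
          - φ t (∑ j, ∑ t', P j t t' * sA j t')) := (Finset.sum_sub_distrib _ _).symm
    _ ≤ ∑ t : Fin T, K * ∑ j, ∑ t', P j t t' * |sI j t' - sA j t'| :=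
        Finset.sum_le_sum fun t _ => hstep t
    _ = K * ∑ j, ∑ t', (∑ t, P j t t') * |sI j t' - sA j t'| := by
        rw [← Finset.mul_sum]
        congr 1
        rw [Finset.sum_comm]
        refine Finset.sum_congr rfl fun j _ => ?_
        rw [Finset.sum_comm]
        refine Finset.sum_congr rfl fun t' _ => ?_
        rw [Finset.sum_mul]
    _ ≤ K * ∑ j, ∑ t', M * |sI j t' - sA j t'| := by
        refine mul_le_mul_of_nonneg_left
          (Finset.sum_le_sum fun j _ => Finset.sum_le_sum fun t' _ =>
            mul_le_mul_of_nonneg_right (hPcol j t') (hDnn j t')) hK.le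
    _ = K * M * ∑ j, ∑ t', |sI j t' - sA j t'| := by
        rw [mul_assoc]
        congr 1
        rw [Finset.mul_sum]
        exact Finset.sum_congr rfl fun j _ => (Finset.mul_sum _ _ _).symm
    _ ≤ K * M * F := mul_le_mul_of_nonneg_left hDsum (by positivity)
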